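/- For every Dyck word x of length 2k with π(x) = (a_1,...,a_{2k}), the bit of x at position a_i is 0 when i is odd and 1 when i is even. -/

import Mathlib

/-- `x ∈ B_k`: bitstring of length `2k` with weight `k` or `k+1`. -/
def inB (k : ℕ) (x : List Bool) : Prop :=
  x.length = 2*k ∧ (x.count true = k ∨ x.count true = k+1)

/-- Dyck word: equally many 1s and 0s, every prefix has at least as many 1s as 0s. -/
def isDyck (x : List Bool) : Prop :=
  x.count true = x.count false ∧ ∀ n, (x.take n).count false ≤ (x.take n).count true

/-- Complement of the reverse. -/
def mirror (x : List Bool) : List Bool := x.reverse.map (fun b => !b)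

/-- Bitwise complement. -/
def compl (x : List Bool) : List Bool := x.map (fun b => !b)

/-- Specification of the recursively defined bit-flip sequence `π`. -/
def IsPiFun (π : List Bool → List ℕ) : Prop :=
  π [] = [] ∧ ∀ u v : List Bool, isDyck u → isDyck v →
    π (true :: u ++ false :: v) =
      (u.length + 2) :: ((π (mirror u)).map (fun a => u.length + 2 - a))
        ++ 1 :: ((π v).map (fun a => u.length + 2 + a))

/-- Flip the bit at (1-indexed) position `a`. -/
def flipBit (y : List Bool) (a : ℕ) : List Bool := y.set (a-1) (!(y.getD (a-1) false))

/-- The path `P(x)`, as the list of vertices obtained by flipping bits in order `π x`. -/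
def pathOf (π : List Bool → List ℕ) (x : List Bool) : List (List Bool) :=
  List.scanl flipBit x (π x)

/-- Adjacency in `G_k`: both vertices in `B_k`, differing in exactly one position. -/
def GkAdj (k : ℕ) (x y : List Bool) : Prop :=
  inB k x ∧ inB k y ∧ (List.range (2*k)).countP (fun i => x.getD i false != y.getD i false) = 1

/-- Adjacency in `G_k^+`: a `G_k` edge or a complement edge. -/
def GkPlusAdj (k : ℕ) (x y : List Bool) : Prop :=
  GkAdj k x y ∨ (inB k x ∧ inB k y ∧ (y = compl x ∨ x = compl y))

private lemma rev_take (l : List Bool) (n : ℕ) (h : n ≤ l.length) :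
    l.reverse.take n = (l.drop (l.length - n)).reverse := by
  conv_lhs => rw [← List.take_append_drop (l.length - n) l]
  rw [List.reverse_append, List.take_left' (by simp; omega)]

private lemma count_map_not (x : Bool) (l : List Bool) :
    (l.map (fun b => !b)).count x = l.count (!x) := by
  conv_lhs => rw [show x = !(!x) by simp]
  exact List.count_map_of_injective _ _ (by intro a b; simp) _

private lemma mirror_isDyck {u : List Bool} (hu : isDyck u) : isDyck (mirror u) := by
  have key : ∀ m, m ≤ u.length →
      ((mirror u).take m).count false ≤ ((mirror u).take m).count true := by
    intro m hm
    have h1 : (mirror u).take m = ((u.drop (u.length - m)).reverse).map (fun b => !b) := by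
      unfold mirror
      rw [← List.map_take, rev_take u m hm]
    rw [h1, count_map_not, count_map_not]
    simp only [List.count_reverse, Bool.not_false, Bool.not_true]
    have h2 := hu.2 (u.length - m)
    have h3 : (u.take (u.length - m)).count true + (u.drop (u.length - m)).count true
        = u.count true := by rw [← List.count_append, List.take_append_drop]
    have h4 : (u.take (u.length - m)).count false + (u.drop (u.length - m)).count false
        = u.count false := by rw [← List.count_append, List.take_append_drop]
    have h5 := hu.1
    omega
  constructor
  · unfold mirror
    rw [count_map_not, count_map_not]
    simp only [List.count_reverse, Bool.not_false, Bool.not_true]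
    exact hu.1.symm
  · intro m
    rcases le_or_gt m (mirror u).length with hm | hm
    · exact key m (by simpa [mirror] using hm)
    · rw [List.take_of_length_le hm.le]
      have h0 := key u.length le_rfl
      rwa [List.take_of_length_le (by simp [mirror])] at h0

private lemma dyck_decomp (x : List Bool) (hx : isDyck x) (hne : x ≠ []) :
    ∃ u v, isDyck u ∧ isDyck v ∧ x = true :: u ++ false :: v := by
  classical
  obtain ⟨b, t, rfl⟩ : ∃ b t, x = b :: t := by
    cases x with
    | nil => exact absurd rfl hne
    | cons b t => exact ⟨b, t, rfl⟩
  obtain rfl : b = true := by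
    by_contra hb
    obtain rfl : b = false := by cases b <;> simp_all
    have := hx.2 1
    simp [List.count_cons] at this
  have hPex : ∃ n : ℕ, 0 < n ∧ ((true :: t).take n).count true = ((true :: t).take n).count false := by
    refine ⟨t.length + 1, by omega, ?_⟩
    rw [List.take_of_length_le (by simp)]
    exact hx.1
  obtain ⟨n, hn, hmin, hnle⟩ :
      ∃ n, (0 < n ∧ ((true :: t).take n).count true = ((true :: t).take n).count false) ∧
        (∀ m, m < n → ¬ (0 < m ∧ ((true :: t).take m).count true = ((true :: t).take m).count false)) ∧
        n ≤ t.length + 1 :=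
    ⟨Nat.find hPex, Nat.find_spec hPex, fun m hm => Nat.find_min hPex hm,
      Nat.find_min' hPex ⟨by omega, by rw [List.take_of_length_le (by simp)]; exact hx.1⟩⟩
  have h2 : 2 ≤ n := by
    rcases Nat.lt_or_ge n 2 with h | h
    · exfalso
      interval_cases n
      · exact absurd hn.1 (by simp)
      · have := hn.2
        simp [List.count_cons] at this
    · exact h
  have hlt : ∀ m, 0 < m → m < n →
      ((true :: t).take m).count false < ((true :: t).take m).count true := by
    intro m hm hmn
    have h1 := hx.2 m
    have h2 := hmin m hmn
    have h3 : ¬ (((true :: t).take m).count true = ((true :: t).take m).count false) :=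
      fun hc => h2 ⟨hm, hc⟩
    omega
  have hn2 : n - 2 < t.length := by omega
  have htake : t.take (n-1) = t.take (n-2) ++ [t[n-2]] := by
    rw [show n-1 = (n-2)+1 by omega, List.take_succ, List.getElem?_eq_getElem hn2]
    simp
  have hxn : (true :: t).take n = true :: (t.take (n-2) ++ [t[n-2]]) := by
    conv_lhs => rw [show n = (n-1)+1 by omega]
    rw [List.take_succ_cons, htake]
  have hfalse : t[n-2] = false := by
    by_contra hb
    have hb' : t[n-2] = true := by simpa using hb
    have h1 := hn.2
    rw [hxn, hb'] at h1
    have hlt2 := hlt (n-1) (by omega) (by omega)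
    rw [show n-1 = (n-2)+1 by omega, List.take_succ_cons] at hlt2
    simp [List.count_append, List.count_cons] at h1 hlt2
    omega
  -- total counts of u
  have hu_tot : (t.take (n-2)).count true = (t.take (n-2)).count false := by
    have h1 := hn.2
    rw [hxn, hfalse] at h1
    simp [List.count_append, List.count_cons] at h1
    omega
  have hsplit : true :: t = (true :: (t.take (n-2) ++ [false])) ++ t.drop (n-1) := by
    have h0 : t = t.take (n-2) ++ t[n-2] :: t.drop (n-1) := by
      conv_lhs => rw [← List.take_append_drop (n-2) t]
      rw [List.drop_eq_getElem_cons hn2, show n-2+1 = n-1 by omega]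
    rw [hfalse] at h0
    conv_lhs => rw [h0]
    simp
  refine ⟨t.take (n-2), t.drop (n-1), ⟨hu_tot, ?_⟩, ⟨?_, ?_⟩, ?_⟩
  · -- prefixes of u
    intro m
    rw [List.take_take]
    rcases Nat.eq_zero_or_pos (min m (n-2)) with h0 | h0
    · rw [h0]; simp
    · have h2' := hlt (min m (n-2) + 1) (by omega) (by omega)
      rw [List.take_succ_cons] at h2'
      simp [List.count_cons] at h2'
      omega
  · -- totals of v
    have h1 := hx.1
    rw [hsplit] at h1
    simp [List.count_append, List.count_cons] at h1
    omega
  · -- prefixes of v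
    intro m
    have hlen : (true :: (t.take (n-2) ++ [false])).length = n := by
      simp
      omega
    have h2' := hx.2 (n + m)
    rw [hsplit, show n + m = (true :: (t.take (n-2) ++ [false])).length + m from by rw [hlen],
      List.take_length_add_append] at h2'
    simp [List.count_append, List.count_cons] at h2'
    omega
  · -- equality
    rw [hsplit]
    simp

private lemma pi_main (π : List Bool → List ℕ) (hπ : IsPiFun π) :
    ∀ N (x : List Bool), x.length ≤ N → isDyck x →
      (∀ a ∈ π x, 1 ≤ a ∧ a ≤ x.length) ∧ (π x).length % 2 = 0 ∧
      ∀ i (hi : i < (π x).length),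
        x.getD ((π x).get ⟨i, hi⟩ - 1) false = (if i % 2 = 0 then false else true) := by
  intro N
  induction N with
  | zero =>
    intro x hlen hx
    obtain rfl : x = [] := List.eq_nil_of_length_eq_zero (Nat.le_zero.mp hlen)
    rw [hπ.1]
    exact ⟨by simp, by simp, by intro i hi; simp at hi⟩
  | succ N ih =>
    intro x hlen hx
    rcases eq_or_ne x [] with rfl | hne
    · rw [hπ.1]
      exact ⟨by simp, by simp, by intro i hi; simp at hi⟩
    obtain ⟨u, v, hu, hv, rfl⟩ := dyck_decomp x hx hne
    have hlen' : u.length + v.length + 2 ≤ N + 1 := by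
      simp at hlen
      omega
    have hmu : (mirror u).length ≤ N := by simp [mirror]; omega
    obtain ⟨hA1, hA2, hA3⟩ := ih (mirror u) hmu (mirror_isDyck hu)
    obtain ⟨hB1, hB2, hB3⟩ := ih v (by omega) hv
    have hrec := hπ.2 u v hu hv
    have hAL : (mirror u).length = u.length := by simp [mirror]
    have hxlen : (true :: u ++ false :: v).length = u.length + v.length + 2 := by
      simp
      omega
    have hplen : (π (true :: u ++ false :: v)).length
        = (π (mirror u)).length + (π v).length + 2 := by
      rw [hrec]
      simp
      omega
    refine ⟨?_, ?_, ?_⟩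
    · intro a ha
      rw [hrec] at ha
      simp only [List.mem_cons, List.mem_append, List.mem_map] at ha
      rw [hxlen]
      rcases ha with (rfl | ⟨b, hb, rfl⟩) | (rfl | ⟨b, hb, rfl⟩)
      · omega
      · have h := hA1 b hb
        rw [hAL] at h
        omega
      · omega
      · have h := hB1 b hb
        omega
    · rw [hplen]
      omega
    · intro i hi
      have hilen : i < (π (mirror u)).length + (π v).length + 2 := by rw [← hplen]; exact hi
      rw [List.get_eq_getElem,
        show (π (true :: u ++ false :: v))[i] = (π (true :: u ++ false :: v)).getD i 0
          from (List.getD_eq_getElem _ _ hi).symm, hrec]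
      have hClen : ((u.length + 2) :: (π (mirror u)).map (fun a => u.length + 2 - a)).length
          = (π (mirror u)).length + 1 := by simp
      rcases Nat.lt_or_ge i ((u.length + 2) ::
          (π (mirror u)).map (fun a => u.length + 2 - a)).length with hiC | hiC
      · rw [List.getD_append _ _ _ _ hiC]
        rcases i with _ | j
        · -- i = 0 : entry u.length + 2, bit is the `false` separator
          rw [List.getD_cons_zero, show u.length + 2 - 1 = u.length + 1 from by omega,
            List.getD_append_right (true :: u) _ false (u.length + 1) (by simp)]
          simp
        · -- inside the mirrored block
          have hj : j < (π (mirror u)).length := by omega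
          have hj' : j < ((π (mirror u)).map (fun a => u.length + 2 - a)).length := by
            simpa using hj
          rw [List.getD_cons_succ, List.getD_eq_getElem _ _ hj', List.getElem_map]
          have hab := hA1 ((π (mirror u))[j]'hj) (List.getElem_mem _)
          rw [hAL] at hab
          set a := (π (mirror u))[j]'hj with hadef
          have hins : u.length - a < u.length := by omega
          rw [show u.length + 2 - a - 1 = (u.length - a) + 1 from by omega,
            List.getD_append (true :: u) _ false ((u.length - a) + 1) (by simp; omega),
            List.getD_cons_succ, List.getD_eq_getElem _ _ hins]
          have hma : a - 1 < (mirror u).length := by omega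
          have hmir : (mirror u)[a-1]'hma = !(u[u.length - a]'hins) := by
            have hidx : u.length - 1 - (a-1) = u.length - a := by omega
            simp [mirror, List.getElem_reverse, hidx]
          have h3 := hA3 j hj
          rw [List.get_eq_getElem, ← hadef, List.getD_eq_getElem _ _ hma, hmir] at h3
          rcases Nat.mod_two_eq_zero_or_one j with hj2 | hj2
          · have h4 : (j+1) % 2 = 1 := by omega
            rw [hj2] at h3
            rw [h4]
            simp at h3 ⊢
            exact h3
          · have h4 : (j+1) % 2 = 0 := by omega
            rw [hj2] at h3
            rw [h4]
            simp at h3 ⊢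
            exact h3
      · -- past the mirrored block
        rw [List.getD_append_right _ _ _ _ hiC]
        rw [hClen] at hiC
        rcases Nat.eq_or_lt_of_le hiC with hj0 | hj1
        · -- the `1` entry
          rw [show i - ((u.length + 2) ::
              (π (mirror u)).map (fun a => u.length + 2 - a)).length = 0 from by
            rw [hClen]; omega]
          rw [List.getD_cons_zero]
          rw [show (1:ℕ) - 1 = 0 from rfl,
            List.getD_append (true :: u) _ false 0 (by simp), List.getD_cons_zero]
          have h4 : i % 2 = 1 := by omega
          rw [h4]
          simp
        · -- inside the v block
          set r := i - (π (mirror u)).length - 2 with hrdef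
          have hrB : r < (π v).length := by omega
          rw [show i - ((u.length + 2) ::
              (π (mirror u)).map (fun a => u.length + 2 - a)).length = r + 1 from by
            rw [hClen]; omega]
          have hr' : r < ((π v).map (fun a => u.length + 2 + a)).length := by simpa using hrB
          rw [List.getD_cons_succ, List.getD_eq_getElem _ _ hr', List.getElem_map]
          have hab := hB1 ((π v)[r]'hrB) (List.getElem_mem _)
          set a := (π v)[r]'hrB with hadef
          rw [show u.length + 2 + a - 1 = (u.length + a) + 1 from by omega,
            List.getD_append_right (true :: u) _ false ((u.length + a) + 1) (by simp),
            show (u.length + a) + 1 - (true :: u).length = (a - 1) + 1 from by simp; omega,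
            List.getD_cons_succ]
          have h3 := hB3 r hrB
          rw [List.get_eq_getElem, ← hadef] at h3
          have h4 : i % 2 = r % 2 := by omega
          rw [h4]
          exact h3

theorem stmt_5 (π : List Bool → List ℕ) (hπ : IsPiFun π) (k : ℕ) (x : List Bool)
    (hx : isDyck x) (hl : x.length = 2*k) :
    ∀ (i : ℕ) (hi : i < (π x).length),
      x.getD ((π x).get ⟨i, hi⟩ - 1) false = (if i % 2 = 0 then false else true) :=
  fun i hi => (pi_main π hπ x.length x le_rfl hx).2.2 i hi
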